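/- A function f : X → Y between extended metric spaces is bornologous if and only if for every graph G (equipped with its graph metric) and every Lipschitz function g : G → X, the composition f ∘ g : G → Y is Lipschitz. -/

import Mathlib

open scoped ENNReal NNReal

/-- A function between extended metric spaces is bornologous if for every `t > 0`
there is `s > 0` such that `d(x,y) < t` implies `d(α x, α y) < s`. -/
def Bornologous {X : Type u} {Y : Type v} [EMetricSpace X] [EMetricSpace Y]
    (α : X → Y) : Prop :=
  ∀ t : ℝ, 0 < t → ∃ s : ℝ, 0 < s ∧ ∀ x y : X,
    edist x y < ENNReal.ofReal t → edist (α x) (α y) < ENNReal.ofReal s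

/-- A function from the vertex set of a graph (with its graph metric, measured by
`SimpleGraph.edist`, which is `∞` when there is no edge-path) to an extended metric
space is Lipschitz if there is `L < ∞` with `d(g v, g w) ≤ L · d_G(v,w)` for all `v, w`. -/
def GraphLipschitz {V : Type w} {X : Type u} [EMetricSpace X]
    (G : SimpleGraph V) (g : V → X) : Prop :=
  ∃ L : ℝ≥0, ∀ v w : V, edist (g v) (g w) ≤ (L : ℝ≥0∞) * (G.edist v w : ℝ≥0∞)

lemma walk_bound {V : Type*} {X : Type*} [EMetricSpace X] {G : SimpleGraph V} {g : V → X}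
    {C : ℝ≥0∞} (h : ∀ v w, G.Adj v w → edist (g v) (g w) ≤ C) :
    ∀ {v w : V} (p : G.Walk v w), edist (g v) (g w) ≤ C * p.length := by
  intro v w p
  induction p with
  | nil => simp
  | @cons _ u _ hadj p ih =>
    refine (edist_triangle _ (g u) _).trans ?_
    rw [SimpleGraph.Walk.length_cons]
    push_cast
    rw [mul_add, mul_one, add_comm (C * _)]
    exact add_le_add (h _ _ hadj) ih

lemma adj_bound {V : Type*} {X : Type*} [EMetricSpace X] {G : SimpleGraph V} {g : V → X}
    {C : ℝ≥0∞} (hC : C ≠ 0) (h : ∀ v w, G.Adj v w → edist (g v) (g w) ≤ C) (v w : V) :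
    edist (g v) (g w) ≤ C * (G.edist v w : ℝ≥0∞) := by
  rcases eq_or_ne (G.edist v w) ⊤ with ht | ht
  · rw [ht]
    simp [ENNReal.mul_top hC]
  · obtain ⟨p, hp⟩ := SimpleGraph.exists_walk_of_edist_ne_top ht
    refine (walk_bound h p).trans ?_
    rw [← hp]
    norm_cast


/-- `f : X → Y` is bornologous iff for every graph `G` (with its graph
metric) and every Lipschitz `g : G → X`, the composition `f ∘ g` is Lipschitz. -/
theorem bornologous_iff_comp_lipschitz {X : Type u} {Y : Type v}
    [EMetricSpace X] [EMetricSpace Y] (f : X → Y) :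
    Bornologous f ↔
    (∀ (V : Type u) (G : SimpleGraph V) (g : V → X),
        GraphLipschitz G g → GraphLipschitz G (fun v => f (g v))) := by
  constructor
  · rintro hb V G g ⟨L, hL⟩
    obtain ⟨s, hs, hS⟩ := hb ((L : ℝ) + 1) (by positivity)
    refine ⟨s.toNNReal, ?_⟩
    have key : ∀ v w, G.Adj v w → edist (f (g v)) (f (g w)) ≤ ENNReal.ofReal s := by
      intro v w hadj
      refine (hS _ _ ?_).le
      have h1 : edist (g v) (g w) ≤ (L : ℝ≥0∞) := by
        have := hL v w
        have he : (G.edist v w : ℝ≥0∞) ≤ 1 := by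
          have := G.edist_le hadj.toWalk
          simp only [SimpleGraph.Walk.length_cons, SimpleGraph.Walk.length_nil] at this
          exact_mod_cast this
        calc edist (g v) (g w) ≤ (L : ℝ≥0∞) * (G.edist v w : ℝ≥0∞) := hL v w
          _ ≤ (L : ℝ≥0∞) * 1 := by gcongr
          _ = L := mul_one _
      refine h1.trans_lt ?_
      rw [ENNReal.ofReal_add (by positivity) zero_le_one]
      simp [ENNReal.ofReal_coe_nnreal, ENNReal.lt_add_right (ENNReal.coe_ne_top)]
    have := adj_bound (C := ENNReal.ofReal s) (ENNReal.ofReal_pos.mpr hs).ne' key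
    simpa [ENNReal.ofReal] using this
  · intro h t ht
    set G : SimpleGraph X :=
      { Adj := fun x y => x ≠ y ∧ edist x y < ENNReal.ofReal t
        symm := by
          constructor
          rintro x y ⟨h1, h2⟩
          exact ⟨h1.symm, by rwa [edist_comm]⟩ }
    have hid : GraphLipschitz G (fun x : X => x) := by
      refine ⟨t.toNNReal, adj_bound ?_ ?_⟩
      · simp [ENNReal.coe_ne_zero, ht.le, ht.ne', ht]
      · rintro x y ⟨-, hlt⟩
        exact hlt.le.trans (by rw [ENNReal.ofReal])
    obtain ⟨L, hL⟩ := h X G _ hid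
    refine ⟨(L : ℝ) + 1, by positivity, fun x y hxy => ?_⟩
    rcases eq_or_ne x y with rfl | hne
    · simp [ENNReal.ofReal_pos]; positivity
    · have hadj : G.Adj x y := ⟨hne, hxy⟩
      have he : (G.edist x y : ℝ≥0∞) ≤ 1 := by
        have := G.edist_le hadj.toWalk
        simp only [SimpleGraph.Walk.length_cons, SimpleGraph.Walk.length_nil] at this
        exact_mod_cast this
      calc edist (f x) (f y) ≤ (L : ℝ≥0∞) * (G.edist x y : ℝ≥0∞) := hL x y
        _ ≤ (L : ℝ≥0∞) * 1 := by gcongr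
        _ = L := mul_one _
        _ < ENNReal.ofReal ((L : ℝ) + 1) := by
            rw [ENNReal.ofReal_add (by positivity) zero_le_one]
            simp [ENNReal.ofReal_coe_nnreal, ENNReal.lt_add_right (ENNReal.coe_ne_top)]
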